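/- With A, τ, G_z as above, for every z in the resolvent set of A one has R(G_z) ∩ D(A) = {0}, i.e. the only element of the range of G_z that lies in the domain of A is 0. -/

import Mathlib

open scoped ComplexInnerProductSpace

/-- For every z in the resolvent set of A, R(G_z) ∩ D(A) = {0}. -/
theorem range_Gz_inter_domain_eq_zero
    {H 𝓗 : Type*} [NormedAddCommGroup H] [InnerProductSpace ℂ H] [CompleteSpace H]
    [NormedAddCommGroup 𝓗] [InnerProductSpace ℂ 𝓗] [CompleteSpace 𝓗]
    (A : H →ₗ.[ℂ] H) (hAdense : Dense (A.domain : Set H))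
    (hAsa : A.adjoint = A)
    -- `0 ∈ ρ(A)`: `A` has a bounded everywhere-defined inverse
    (Ainv : H →L[ℂ] H) (hAinv_mem : ∀ ψ : H, Ainv ψ ∈ A.domain)
    (hAinv : ∀ ψ : H, A ⟨Ainv ψ, hAinv_mem ψ⟩ = ψ)
    (hAinv' : ∀ x : A.domain, Ainv (A x) = (x : H))
    -- `τ` is linear, graph-norm bounded, surjective
    (τ : A.domain →ₗ[ℂ] 𝓗)
    (hτbdd : ∃ C : ℝ, ∀ x : A.domain, ‖τ x‖ ≤ C * (‖(x : H)‖ + ‖A x‖))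
    (hτsurj : Function.Surjective τ)
    (hτker : Dense (Subtype.val '' {x : A.domain | τ x = 0} : Set H))
    -- `z ∈ ρ(A)`: bounded resolvent `Rz = (-A + z̄)⁻¹`
    (z : ℂ)
    (Rz : H →L[ℂ] H) (hRz_mem : ∀ ψ : H, Rz ψ ∈ A.domain)
    (hRz : ∀ ψ : H, -(A ⟨Rz ψ, hRz_mem ψ⟩) + (starRingEnd ℂ) z • Rz ψ = ψ)
    (hRz' : ∀ x : A.domain, Rz (-(A x) + (starRingEnd ℂ) z • (x : H)) = (x : H))
    -- `G_z := (τ (-A + z̄)⁻¹)*`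
    (G : 𝓗 →L[ℂ] H)
    (hG : ∀ (ξ : 𝓗) (ψ : H), ⟪G ξ, ψ⟫ = ⟪ξ, τ ⟨Rz ψ, hRz_mem ψ⟩⟫) :
    ∀ φ : H, (∃ ξ : 𝓗, G ξ = φ) → φ ∈ A.domain → φ = 0 := by
  rintro φ ⟨ξ, hξ⟩ hφ
  set φ' : A.domain := ⟨φ, hφ⟩ with hφ'
  -- symmetry of A from self-adjointness
  have hsym : ∀ x y : A.domain, ⟪A x, (y : H)⟫ = ⟪(x : H), A y⟫ := by
    have h := LinearPMap.adjoint_isFormalAdjoint hAdense (T := A)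
    rw [hAsa] at h
    exact h
  -- orthogonality of -(A φ') + z • φ to the kernel of τ
  have hperp : ∀ x : A.domain, τ x = 0 → ⟪-(A φ') + z • φ, (x : H)⟫ = 0 := by
    intro x hx
    have h1 : (⟨Rz (-(A x) + (starRingEnd ℂ) z • (x : H)),
        hRz_mem _⟩ : A.domain) = x := Subtype.ext (hRz' x)
    have h2 : ⟪φ, -(A x) + (starRingEnd ℂ) z • (x : H)⟫ = 0 := by
      rw [← hξ, hG, h1, hx, inner_zero_right]
    have h3 : ⟪-(A φ') + z • φ, (x : H)⟫
        = ⟪φ, -(A x) + (starRingEnd ℂ) z • (x : H)⟫ := by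
      rw [inner_add_left, inner_add_right, inner_neg_left, inner_neg_right,
        inner_smul_left, inner_smul_right, hsym φ' x]
    rw [h3, h2]
  -- conclude the vector is zero using density
  have hy0 : -(A φ') + z • φ = 0 := by
    have hcont : Continuous fun ψ : H => (⟪-(A φ') + z • φ, ψ⟫ : ℂ) :=
      continuous_const.inner continuous_id
    have heq : (fun ψ : H => (⟪-(A φ') + z • φ, ψ⟫ : ℂ)) = fun _ => 0 := by
      refine hcont.ext_on hτker continuous_const ?_
      rintro _ ⟨x, hx, rfl⟩
      exact hperp x hx
    have h := congr_fun heq (-(A φ') + z • φ)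
    simpa [inner_self_eq_zero] using h
  have hA : A φ' = z • φ := by
    have := neg_add_eq_zero.mp hy0
    exact this
  by_cases hφ0 : φ = 0
  · exact hφ0
  · -- z must be real
    have hne : (⟪φ, φ⟫ : ℂ) ≠ 0 := by simpa [inner_self_eq_zero] using hφ0
    have hzr : (starRingEnd ℂ) z = z := by
      have h1 := hsym φ' φ'
      rw [hA] at h1
      rw [inner_smul_left, inner_smul_right] at h1
      exact mul_right_cancel₀ hne h1
    have h2 := hRz' φ'
    rw [hzr] at h2
    have h3 : (-(A φ') + z • (φ' : H)) = 0 := hy0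
    rw [h3] at h2
    rw [map_zero] at h2
    exact h2.symm
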